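/- arXiv:1211.1444 — 3 statements merged into one kernel-verified Lean document; each statement's English description precedes it below -/
import Mathlib

section
/- Let Q be a real symmetric matrix and P a positive definite symmetric matrix of the same size. Then for all sufficiently small ε > 0, i^-(Q − εP) = i^-(Q) + dim ker(Q). -/
open Matrix

/-- The negative inertia index of a real matrix: the maximal dimension of a subspace on which
the quadratic form `x ↦ ⟨x, Qx⟩` is negative definite.  For a symmetric matrix this is the
number of negative eigenvalues counted with multiplicity. -/
noncomputable def negIndex {n : ℕ} (Q : Matrix (Fin n) (Fin n) ℝ) : ℕ :=
  sSup {d : ℕ | ∃ W : Submodule ℝ (Fin n → ℝ), Module.finrank ℝ W = d ∧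
    ∀ x ∈ W, x ≠ 0 → x ⬝ᵥ Q.mulVec x < 0}

open Matrix Module Finset

section Aux
variable {n : ℕ}

noncomputable abbrev E (n : ℕ) := EuclideanSpace ℝ (Fin n)

instance (n : ℕ) : Coe (Fin n → ℝ) (E n) := ⟨WithLp.toLp 2⟩

lemma dot_eq_inner (x y : E n) : (inner ℝ x y : ℝ) = (x : Fin n → ℝ) ⬝ᵥ (y : Fin n → ℝ) := by
  simp [PiLp.inner_apply, dotProduct, mul_comm]

lemma parseval (b : OrthonormalBasis (Fin n) ℝ (E n)) (x y : E n) :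
    (x : Fin n → ℝ) ⬝ᵥ (y : Fin n → ℝ) = ∑ i, b.repr x i * b.repr y i := by
  rw [← dot_eq_inner, ← b.sum_inner_mul_inner x y]
  congr 1; ext i
  rw [b.repr_apply_apply, b.repr_apply_apply, real_inner_comm x (b i)]

variable {A : Matrix (Fin n) (Fin n) ℝ}

lemma repr_mulVec (hA : A.IsHermitian) (x : E n) (i : Fin n) :
    hA.eigenvectorBasis.repr (A.mulVec x : E n) i =
      hA.eigenvalues i * hA.eigenvectorBasis.repr x i := by
  set b := hA.eigenvectorBasis
  rw [b.repr_apply_apply, b.repr_apply_apply, dot_eq_inner, dot_eq_inner,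
    Matrix.dotProduct_mulVec, ← Matrix.mulVec_transpose]
  have : Aᵀ = A := hA
  rw [this]
  have h2 : A *ᵥ (b i : Fin n → ℝ) = hA.eigenvalues i • (b i : Fin n → ℝ) :=
    hA.mulVec_eigenvectorBasis i
  rw [h2, smul_dotProduct]
  rfl

lemma quadform_eq_sum (hA : A.IsHermitian) (x : E n) :
    (x : Fin n → ℝ) ⬝ᵥ A.mulVec x =
      ∑ i, hA.eigenvalues i * (hA.eigenvectorBasis.repr x i) ^ 2 := by
  rw [parseval hA.eigenvectorBasis x (A.mulVec x : E n)]
  congr 1; ext i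
  rw [repr_mulVec hA]
  ring

lemma mem_span_iff (b : OrthonormalBasis (Fin n) ℝ (E n)) (S : Finset (Fin n)) (x : Fin n → ℝ) :
    x ∈ Submodule.span ℝ ((fun i => (b i).ofLp) '' (S : Set (Fin n))) ↔ ∀ i ∉ S, b.repr x i = 0 := by
  constructor
  · intro hx i hi
    induction hx using Submodule.span_induction with
    | mem y hy =>
      obtain ⟨j, hj, rfl⟩ := hy
      simp only [WithLp.toLp_ofLp]
      rw [b.repr_self]
      simp only [EuclideanSpace.single_apply]
      exact if_neg (by rintro rfl; exact hi hj)
    | zero => simp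
    | add y z _ _ hy hz => simp [map_add, hy, hz]
    | smul c y _ hy => simp [_root_.map_smul, hy]
  · intro h
    have hx : x = ∑ i, b.repr x i • (b i).ofLp := by
      have := congrArg WithLp.ofLp (b.sum_repr (WithLp.toLp 2 x))
      simpa using this.symm
    rw [hx]
    refine Submodule.sum_mem _ fun i _ => ?_
    by_cases hi : i ∈ S
    · exact Submodule.smul_mem _ _ (Submodule.subset_span ⟨i, hi, rfl⟩)
    · rw [h i hi, zero_smul]; exact Submodule.zero_mem _

lemma finrank_span_basis (b : OrthonormalBasis (Fin n) ℝ (E n)) (S : Finset (Fin n)) :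
    finrank ℝ (Submodule.span ℝ ((fun i => (b i).ofLp) '' (S : Set (Fin n)))) = S.card := by
  have hli : LinearIndependent ℝ (fun i : {i // i ∈ S} => (b i).ofLp) :=
    (b.orthonormal.linearIndependent.comp _ Subtype.val_injective).map'
      (WithLp.linearEquiv 2 ℝ (Fin n → ℝ)).toLinearMap (LinearEquiv.ker _)
  have himg : Set.range (fun i : {i // i ∈ S} => (b i).ofLp) = (fun i => (b i).ofLp) '' (S : Set (Fin n)) := by
    ext y; simp [Set.range, Set.mem_image]
  rw [← himg, finrank_span_eq_card hli, Fintype.card_coe]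

lemma zero_mem_negIndexSet (Q : Matrix (Fin n) (Fin n) ℝ) :
    0 ∈ {d : ℕ | ∃ W : Submodule ℝ (Fin n → ℝ), Module.finrank ℝ W = d ∧
      ∀ x ∈ W, x ≠ 0 → x ⬝ᵥ Q.mulVec x < 0} :=
  ⟨⊥, finrank_bot ℝ _, fun x hx hx0 => absurd ((Submodule.mem_bot ℝ).1 hx) hx0⟩

lemma negIndexSet_bddAbove (Q : Matrix (Fin n) (Fin n) ℝ) :
    BddAbove {d : ℕ | ∃ W : Submodule ℝ (Fin n → ℝ), Module.finrank ℝ W = d ∧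
      ∀ x ∈ W, x ≠ 0 → x ⬝ᵥ Q.mulVec x < 0} := by
  refine ⟨n, fun d hd => ?_⟩
  obtain ⟨W, rfl, -⟩ := hd
  simpa [Module.finrank_fin_fun] using (Submodule.finrank_le W)

lemma le_negIndex (Q : Matrix (Fin n) (Fin n) ℝ) (W : Submodule ℝ (Fin n → ℝ))
    (hW : ∀ x ∈ W, x ≠ 0 → x ⬝ᵥ Q.mulVec x < 0) : finrank ℝ W ≤ negIndex Q :=
  le_csSup (negIndexSet_bddAbove Q) ⟨W, rfl, hW⟩

lemma negIndex_add_le (Q : Matrix (Fin n) (Fin n) ℝ) (U : Submodule ℝ (Fin n → ℝ))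
    (hU : ∀ x ∈ U, 0 ≤ x ⬝ᵥ Q.mulVec x) : negIndex Q + finrank ℝ U ≤ n := by
  have hmem := Nat.sSup_mem ⟨0, zero_mem_negIndexSet Q⟩ (negIndexSet_bddAbove Q)
  obtain ⟨W, hWrank, hWneg⟩ := hmem
  have hdisj : W ⊓ U = ⊥ := by
    rw [Submodule.eq_bot_iff]
    intro x hx
    by_contra h0
    exact absurd (hU x hx.2) (not_le.2 (hWneg x hx.1 h0))
  have := Submodule.finrank_sup_add_finrank_inf_eq W U
  rw [hdisj, finrank_bot, add_zero] at this
  calc negIndex Q + finrank ℝ U = finrank ℝ W + finrank ℝ U := by rw [hWrank]; rfl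
    _ = finrank ℝ ↥(W ⊔ U) := this.symm
    _ ≤ finrank ℝ (Fin n → ℝ) := Submodule.finrank_le _
    _ = n := Module.finrank_fin_fun ℝ

end Aux

/-- Let `Q` be a real symmetric matrix and `P` a positive definite symmetric matrix of the
same size.  Then for all sufficiently small `ε > 0`,
`i⁻(Q − εP) = i⁻(Q) + dim ker(Q)`. -/
theorem negIndex_sub_smul_posDef (n : ℕ) (Q P : Matrix (Fin n) (Fin n) ℝ)
    (hQ : Q.IsSymm) (hP : P.PosDef) :
    ∃ ε₀ > 0, ∀ ε : ℝ, 0 < ε → ε < ε₀ →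
      negIndex (Q - ε • P) =
        negIndex Q + Module.finrank ℝ (LinearMap.ker (Matrix.toLin' Q)) := by
  classical
  have hQ' : Q.IsHermitian := by
    rw [Matrix.IsHermitian, Matrix.conjTranspose]
    ext i j; simpa using congrFun (congrFun hQ i) j
  set b := hQ'.eigenvectorBasis with hb
  set μ := hQ'.eigenvalues with hμ
  set Sneg := Finset.univ.filter (fun i => μ i < 0) with hSneg
  set Szero := Finset.univ.filter (fun i => μ i = 0) with hSzero
  set Spos := Finset.univ.filter (fun i => 0 < μ i) with hSpos
  -- coordinate helpers
  have hmemW : ∀ (S : Finset (Fin n)) (x : Fin n → ℝ),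
      x ∈ (Submodule.span ℝ ((fun i => (b i).ofLp) '' (S : Set (Fin n))) : Submodule ℝ (Fin n → ℝ)) ↔
        ∀ i ∉ S, b.repr x i = 0 := fun S x => mem_span_iff b S x
  have hrankW : ∀ S : Finset (Fin n),
      finrank ℝ (Submodule.span ℝ ((fun i => (b i).ofLp) '' (S : Set (Fin n))) : Submodule ℝ (Fin n → ℝ))
        = S.card := fun S => finrank_span_basis b S
  have hsumQ : ∀ (S : Finset (Fin n)) (x : Fin n → ℝ), (∀ i ∉ S, b.repr x i = 0) →
      x ⬝ᵥ Q *ᵥ x = ∑ i ∈ S, μ i * (b.repr x i) ^ 2 := by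
    intro S x hx
    rw [quadform_eq_sum hQ']
    exact (Finset.sum_subset (Finset.subset_univ S)
      (fun i _ hi => by rw [hx i hi]; ring)).symm
  have hsumT : ∀ (S : Finset (Fin n)) (x : Fin n → ℝ), (∀ i ∉ S, b.repr x i = 0) →
      x ⬝ᵥ x = ∑ i ∈ S, (b.repr x i) ^ 2 := by
    intro S x hx
    rw [parseval b x x]
    refine (Finset.sum_subset (Finset.subset_univ S)
      (fun i _ hi => by rw [hx i hi]; ring)).symm.trans ?_
    exact Finset.sum_congr rfl fun i _ => (sq (b.repr x i)).symm ▸ by ring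
  have hne : ∀ x : Fin n → ℝ, x ≠ 0 → ∃ i, b.repr x i ≠ 0 := by
    intro x hx
    by_contra h
    push_neg at h
    apply hx
    have h0 : b.repr x = 0 := by
      ext i; exact h i
    have := b.repr.map_eq_zero_iff.1 h0
    simpa using this
  -- cardinalities
  have hdisj1 : Disjoint Szero Spos := by
    rw [Finset.disjoint_left]
    intro i hi hip
    rw [hSzero, Finset.mem_filter] at hi
    rw [hSpos, Finset.mem_filter] at hip
    exact absurd hip.2 (by rw [hi.2]; simp)
  have hcard : Sneg.card + (Szero.card + Spos.card) = n := by
    have h1 : Finset.univ.filter (fun i => ¬ μ i < 0) = Szero ∪ Spos := by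
      ext i
      simp only [hSzero, hSpos, Finset.mem_filter, Finset.mem_union, Finset.mem_univ,
        true_and, not_lt]
      constructor
      · intro h
        rcases h.lt_or_eq with h' | h'
        · exact Or.inr h'
        · exact Or.inl h'.symm
      · rintro (h | h) <;> simp [h, le_of_lt, h.le]
    have h2 := Finset.card_filter_add_card_filter_not
      (s := (Finset.univ : Finset (Fin n))) (p := fun i => μ i < 0)
    rw [h1, Finset.card_union_of_disjoint hdisj1] at h2
    simpa [hSneg] using h2
  -- kernel
  have hker : LinearMap.ker (Matrix.toLin' Q) =
      (Submodule.span ℝ ((fun i => (b i).ofLp) '' (Szero : Set (Fin n))) : Submodule ℝ (Fin n → ℝ)) := by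
    ext x
    rw [LinearMap.mem_ker, Matrix.toLin'_apply, hmemW]
    constructor
    · intro h i hi
      have h2 := repr_mulVec hQ' (x : E n) i
      have h3 : b.repr ((Q *ᵥ x : Fin n → ℝ) : E n) i = 0 := by
        rw [show (Q *ᵥ x : Fin n → ℝ) = 0 from h]
        simp
      rw [h3] at h2
      have hμi : μ i ≠ 0 := by
        rw [hSzero] at hi
        simpa using hi
      have := h2.symm
      rcases mul_eq_zero.1 this with h4 | h4
      · exact absurd h4 hμi
      · exact h4
    · intro h
      have hco : ∀ i, b.repr ((Q *ᵥ x : Fin n → ℝ) : E n) i = 0 := by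
        intro i
        rw [repr_mulVec hQ' (x : E n) i]
        by_cases hi : i ∈ Szero
        · rw [hSzero, Finset.mem_filter] at hi
          rw [show hQ'.eigenvalues i = μ i from rfl, hi.2, zero_mul]
        · rw [h i hi, mul_zero]
      have h0 : b.repr ((Q *ᵥ x : Fin n → ℝ) : E n) = 0 := by
        ext i; exact hco i
      simpa using b.repr.map_eq_zero_iff.1 h0
  have hkerrank : finrank ℝ (LinearMap.ker (Matrix.toLin' Q)) = Szero.card := by
    rw [hker, hrankW]
  -- negIndex Q = Sneg.card
  have hnegQ : negIndex Q = Sneg.card := by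
    apply le_antisymm
    · have := negIndex_add_le Q (Submodule.span ℝ ((fun i => (b i).ofLp) '' (↑(Szero ∪ Spos) : Set (Fin n))))
        (by
          intro x hx
          rw [hsumQ (Szero ∪ Spos) x (by
            intro i hi
            exact ((hmemW (Szero ∪ Spos) x).1 hx) i hi)]
          apply Finset.sum_nonneg
          intro i hi
          rcases Finset.mem_union.1 hi with h | h
          · rw [hSzero, Finset.mem_filter] at h
            simp [h.2]
          · rw [hSpos, Finset.mem_filter] at h
            exact mul_nonneg h.2.le (sq_nonneg _))
      rw [hrankW, Finset.card_union_of_disjoint hdisj1] at this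
      omega
    · rw [← hrankW Sneg]
      apply le_negIndex
      intro x hx hx0
      have hcoord := (hmemW Sneg x).1 hx
      rw [hsumQ Sneg x hcoord]
      obtain ⟨i₀, hi₀⟩ := hne x hx0
      have hi₀mem : i₀ ∈ Sneg := by
        by_contra h
        exact hi₀ (hcoord i₀ h)
      have : ∑ i ∈ Sneg, μ i * (b.repr x i) ^ 2 < ∑ i ∈ Sneg, (0 : ℝ) := by
        apply Finset.sum_lt_sum
        · intro i hi
          rw [hSneg, Finset.mem_filter] at hi
          have : (b.repr x i) ^ 2 ≥ 0 := sq_nonneg _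
          nlinarith [hi.2]
        · refine ⟨i₀, hi₀mem, ?_⟩
          have h1 : μ i₀ < 0 := by
            rw [hSneg, Finset.mem_filter] at hi₀mem; exact hi₀mem.2
          have h2 : (0:ℝ) < (b.repr x i₀) ^ 2 := by positivity
          nlinarith
      simpa using this
  -- P bounds
  set ν := hP.1.eigenvalues with hν
  set bp := hP.1.eigenvectorBasis with hbp
  set C := (insert (1:ℝ) (Finset.univ.image ν)).max' (Finset.insert_nonempty _ _) with hC
  have hC1 : (1:ℝ) ≤ C := Finset.le_max' _ _ (Finset.mem_insert_self _ _)
  have hCpos : (0:ℝ) < C := lt_of_lt_of_le one_pos hC1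
  have hCν : ∀ j, ν j ≤ C := fun j =>
    Finset.le_max' _ _ (Finset.mem_insert_of_mem (Finset.mem_image_of_mem _ (Finset.mem_univ j)))
  have hPbound : ∀ x : Fin n → ℝ, x ⬝ᵥ P *ᵥ x ≤ C * (x ⬝ᵥ x) := by
    intro x
    rw [quadform_eq_sum hP.1 x, parseval bp x x, Finset.mul_sum]
    apply Finset.sum_le_sum
    intro j _
    nlinarith [hCν j, sq_nonneg (bp.repr x j)]
  have hPpos : ∀ x : Fin n → ℝ, x ≠ 0 → 0 < x ⬝ᵥ P *ᵥ x := fun x hx => by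
    simpa using hP.dotProduct_mulVec_pos hx
  -- lambda
  set lam := (insert (1:ℝ) (Spos.image μ)).min' (Finset.insert_nonempty _ _) with hlam
  have hlampos : 0 < lam := by
    rcases Finset.mem_insert.1 (Finset.min'_mem (insert (1:ℝ) (Spos.image μ))
      (Finset.insert_nonempty _ _)) with h | h
    · rw [hlam, h]; norm_num
    · obtain ⟨i, hi, hEq⟩ := Finset.mem_image.1 h
      rw [hlam, ← hEq]
      rw [hSpos, Finset.mem_filter] at hi
      exact hi.2
  have hlamle : ∀ i ∈ Spos, lam ≤ μ i := fun i hi =>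
    Finset.min'_le _ _ (Finset.mem_insert_of_mem (Finset.mem_image_of_mem _ hi))
  refine ⟨lam / C, div_pos hlampos hCpos, ?_⟩
  intro ε hε hεlt
  have hεC : ε * C < lam := (lt_div_iff₀ hCpos).1 hεlt
  have hexpand : ∀ x : Fin n → ℝ,
      x ⬝ᵥ (Q - ε • P) *ᵥ x = x ⬝ᵥ Q *ᵥ x - ε * (x ⬝ᵥ P *ᵥ x) := by
    intro x
    rw [Matrix.sub_mulVec, dotProduct_sub, Matrix.smul_mulVec, dotProduct_smul,
      smul_eq_mul]
  have hdisj0 : Disjoint Sneg Szero := by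
    rw [Finset.disjoint_left]
    intro i hi hiz
    rw [hSneg, Finset.mem_filter] at hi
    rw [hSzero, Finset.mem_filter] at hiz
    exact absurd hiz.2 (by rw [hSzero] at *; exact ne_of_lt hi.2)
  rw [hnegQ, hkerrank]
  apply le_antisymm
  · -- upper bound
    have hup := negIndex_add_le (Q - ε • P)
      (Submodule.span ℝ ((fun i => (b i).ofLp) '' (↑Spos : Set (Fin n))))
      (by
        intro x hx
        have hcoord := (hmemW Spos x).1 hx
        have hQx : lam * (x ⬝ᵥ x) ≤ x ⬝ᵥ Q *ᵥ x := by
          rw [hsumQ Spos x hcoord, hsumT Spos x hcoord, Finset.mul_sum]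
          apply Finset.sum_le_sum
          intro i hi
          exact mul_le_mul_of_nonneg_right (hlamle i hi) (sq_nonneg _)
        have hPx := hPbound x
        have ht : 0 ≤ x ⬝ᵥ x := by
          rw [hsumT Finset.univ x (by simp)]
          exact Finset.sum_nonneg fun i _ => sq_nonneg _
        rw [hexpand x]
        nlinarith [mul_le_mul_of_nonneg_left hPx hε.le,
          mul_le_mul_of_nonneg_right hεC.le ht])
    rw [hrankW] at hup
    omega
  · -- lower bound
    have hlo := le_negIndex (Q - ε • P)
      (Submodule.span ℝ ((fun i => (b i).ofLp) '' (↑(Sneg ∪ Szero) : Set (Fin n))))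
      (by
        intro x hx hx0
        have hcoord := (hmemW (Sneg ∪ Szero) x).1 hx
        have hQx : x ⬝ᵥ Q *ᵥ x ≤ 0 := by
          rw [hsumQ (Sneg ∪ Szero) x hcoord]
          apply Finset.sum_nonpos
          intro i hi
          have hμi : μ i ≤ 0 := by
            rcases Finset.mem_union.1 hi with h | h
            · rw [hSneg, Finset.mem_filter] at h; exact h.2.le
            · rw [hSzero, Finset.mem_filter] at h; exact h.2.le
          exact mul_nonpos_of_nonpos_of_nonneg hμi (sq_nonneg _)
        have hPx : 0 < x ⬝ᵥ P *ᵥ x := hPpos x hx0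
        rw [hexpand x]
        nlinarith [mul_pos hε hPx])
    rw [hrankW, Finset.card_union_of_disjoint hdisj0] at hlo
    exact hlo
end

section
/- For every r ≥ 1, Z^{(r)} = ⋃_{α ∈ I_r} ⋂_{j ∈ α} A_j, where I_r is the collection of subsets of {0,...,n−1} consisting of r consecutive integers, A_j is the topological boundary of P_j = {Q ∈ Sym_n(R) : i^-(Q) ≤ j}, and Z^{(r)} = {Q ∈ Sym_n(R) : dim ker(Q) ≥ r}. -/
open Matrix

/-- The space of real symmetric `n×n` matrices with its natural topology. -/
abbrev SymMat (n : ℕ) : Type := {Q : Matrix (Fin n) (Fin n) ℝ // Q.IsSymm}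

/-- `P_j = {Q ∈ Sym_n(ℝ) : i⁻(Q) ≤ j}`. -/
noncomputable def Pj (n j : ℕ) : Set (SymMat n) := {Q | negIndex Q.1 ≤ j}

/-- `A_j` is the topological boundary of `P_j` in `Sym_n(ℝ)`. -/
noncomputable def Aj (n j : ℕ) : Set (SymMat n) := frontier (Pj n j)

namespace ZrAux

open Module Submodule

attribute [local instance] Matrix.normedAddCommGroup Matrix.normedSpace

variable {n : ℕ}

def NegDef (Q : Matrix (Fin n) (Fin n) ℝ) (W : Submodule ℝ (Fin n → ℝ)) : Prop :=
  ∀ x ∈ W, x ≠ 0 → x ⬝ᵥ Q.mulVec x < 0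

def nSet (Q : Matrix (Fin n) (Fin n) ℝ) : Set ℕ :=
  {d : ℕ | ∃ W : Submodule ℝ (Fin n → ℝ), Module.finrank ℝ W = d ∧ NegDef Q W}

lemma negIndex_eq (Q : Matrix (Fin n) (Fin n) ℝ) : negIndex Q = sSup (nSet Q) := rfl

lemma zero_mem_nSet (Q : Matrix (Fin n) (Fin n) ℝ) : 0 ∈ nSet Q :=
  ⟨⊥, finrank_bot ℝ _, fun x hx hx0 => absurd ((Submodule.mem_bot ℝ).mp hx) hx0⟩

lemma nSet_le (Q : Matrix (Fin n) (Fin n) ℝ) {d : ℕ} (hd : d ∈ nSet Q) : d ≤ n := by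
  obtain ⟨W, hW, -⟩ := hd
  have := W.finrank_le
  rwa [hW, Module.finrank_fin_fun] at this

lemma le_negIndex (Q : Matrix (Fin n) (Fin n) ℝ) {d : ℕ} (hd : d ∈ nSet Q) :
    d ≤ negIndex Q :=
  le_csSup ⟨n, fun _ h => nSet_le Q h⟩ hd

lemma nSet_mono (Q : Matrix (Fin n) (Fin n) ℝ) {d e : ℕ} (hd : d ∈ nSet Q) (he : e ≤ d) :
    e ∈ nSet Q := by
  obtain ⟨W, hW, hneg⟩ := hd
  have he' : e ≤ finrank ℝ W := by rw [hW]; exact he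
  obtain ⟨f, hf⟩ := exists_linearIndependent_of_le_finrank he'
  have hf' : LinearIndependent ℝ (fun i => (f i : Fin n → ℝ)) := hf.map' W.subtype W.ker_subtype
  refine ⟨Submodule.span ℝ (Set.range fun i => (f i : Fin n → ℝ)), ?_, ?_⟩
  · rw [finrank_span_eq_card hf']; simp
  · intro x hx hx0
    refine hneg x ?_ hx0
    have : Submodule.span ℝ (Set.range fun i => (f i : Fin n → ℝ)) ≤ W := by
      rw [Submodule.span_le]; rintro - ⟨i, rfl⟩; exact (f i).2
    exact this hx

lemma mem_nSet_of_le_negIndex (Q : Matrix (Fin n) (Fin n) ℝ) {d : ℕ} (hd : d ≤ negIndex Q) :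
    d ∈ nSet Q := by
  have hmem : negIndex Q ∈ nSet Q :=
    Nat.sSup_mem ⟨0, zero_mem_nSet Q⟩ ⟨n, fun _ h => nSet_le Q h⟩
  exact nSet_mono Q hmem hd

lemma negIndex_le_iff (Q : Matrix (Fin n) (Fin n) ℝ) (j : ℕ) :
    negIndex Q ≤ j ↔ (j + 1) ∉ nSet Q := by
  constructor
  · intro h hmem
    exact absurd (le_negIndex Q hmem) (by omega)
  · intro h
    by_contra hc
    exact h (mem_nSet_of_le_negIndex Q (by omega))

lemma entry_le_norm (M : Matrix (Fin n) (Fin n) ℝ) (i j : Fin n) : |M i j| ≤ ‖M‖ :=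
  le_trans (norm_le_pi_norm (f := M i) j) (norm_le_pi_norm (f := M) i)

lemma quad_bound (M : Matrix (Fin n) (Fin n) ℝ) (x : Fin n → ℝ) (hx : ‖x‖ ≤ 1) :
    |x ⬝ᵥ M.mulVec x| ≤ (n : ℝ)^2 * ‖M‖ := by
  have hxi : ∀ i, |x i| ≤ 1 := fun i => le_trans (norm_le_pi_norm (f := x) i) hx
  have h1 : |x ⬝ᵥ M.mulVec x| ≤ ∑ i, ∑ j, |x i| * (|M i j| * |x j|) := by
    simp only [dotProduct, Matrix.mulVec]
    calc |∑ i, x i * ∑ j, M i j * x j| ≤ ∑ i, |x i * ∑ j, M i j * x j| :=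
          Finset.abs_sum_le_sum_abs _ _
      _ ≤ ∑ i, ∑ j, |x i| * (|M i j| * |x j|) := by
          refine Finset.sum_le_sum fun i _ => ?_
          rw [abs_mul]
          calc |x i| * |∑ j, M i j * x j| ≤ |x i| * ∑ j, |M i j * x j| := by
                refine mul_le_mul_of_nonneg_left ?_ (abs_nonneg _)
                exact Finset.abs_sum_le_sum_abs _ _
            _ = ∑ j, |x i| * (|M i j| * |x j|) := by
                rw [Finset.mul_sum]; congr 1; ext j; rw [abs_mul]
  have h2 : ∀ i ∈ Finset.univ, ∀ j ∈ Finset.univ (α := Fin n),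
      |x i| * (|M i j| * |x j|) ≤ ‖M‖ := by
    intro i _ j _
    have := entry_le_norm M i j
    have h0 : (0:ℝ) ≤ ‖M‖ := norm_nonneg _
    calc |x i| * (|M i j| * |x j|) ≤ 1 * (‖M‖ * 1) := by
          apply _root_.mul_le_mul (hxi i) ?_ (by positivity) zero_le_one
          exact _root_.mul_le_mul this (hxi j) (abs_nonneg _) h0
      _ = ‖M‖ := by ring
  calc |x ⬝ᵥ M.mulVec x| ≤ ∑ i, ∑ j, |x i| * (|M i j| * |x j|) := h1
    _ ≤ ∑ i : Fin n, ∑ j : Fin n, ‖M‖ := by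
        exact Finset.sum_le_sum fun i hi => Finset.sum_le_sum (h2 i hi)
    _ = (n:ℝ)^2 * ‖M‖ := by simp [sq]; ring

lemma cont_quad (Q : Matrix (Fin n) (Fin n) ℝ) :
    Continuous fun x : Fin n → ℝ => x ⬝ᵥ Q.mulVec x := by
  simp only [dotProduct, Matrix.mulVec]
  fun_prop

lemma negDef_stab {Q : Matrix (Fin n) (Fin n) ℝ} {W : Submodule ℝ (Fin n → ℝ)}
    (hneg : NegDef Q W) :
    ∃ ε > 0, ∀ Q' : Matrix (Fin n) (Fin n) ℝ, ‖Q' - Q‖ < ε → NegDef Q' W := by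
  by_cases hW : W = ⊥
  · exact ⟨1, one_pos, fun Q' _ x hx hx0 => absurd (by simpa [hW] using hx) hx0⟩
  · obtain ⟨x₁, hx₁W, hx₁⟩ := Submodule.exists_mem_ne_zero_of_ne_bot hW
    set K : Set (Fin n → ℝ) := Metric.sphere 0 1 ∩ W with hK
    have hKc : IsCompact K :=
      (isCompact_sphere 0 1).inter_right W.closed_of_finiteDimensional
    have hKne : K.Nonempty := by
      refine ⟨‖x₁‖⁻¹ • x₁, ?_, W.smul_mem _ hx₁W⟩
      simp [norm_smul, norm_ne_zero_iff.mpr hx₁]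
    obtain ⟨x₀, hx₀K, hmax⟩ := hKc.exists_isMaxOn hKne (cont_quad Q).continuousOn
    set c : ℝ := -(x₀ ⬝ᵥ Q.mulVec x₀) with hc
    have hx₀W : x₀ ∈ W := hx₀K.2
    have hx₀n : ‖x₀‖ = 1 := by simpa using hx₀K.1
    have hx₀0 : x₀ ≠ 0 := fun h => by simp [h] at hx₀n
    have hcpos : 0 < c := by
      have := hneg x₀ hx₀W hx₀0; simp [hc]; linarith
    refine ⟨c / ((n:ℝ)^2 + 1), by positivity, fun Q' hQ' x hxW hx0 => ?_⟩
    set u : Fin n → ℝ := ‖x‖⁻¹ • x with hu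
    have hxn : ‖x‖ ≠ 0 := norm_ne_zero_iff.mpr hx0
    have huK : u ∈ K := ⟨by simp [hu, norm_smul, hxn], W.smul_mem _ hxW⟩
    have hub : u ⬝ᵥ Q'.mulVec u < 0 := by
      have h1 : u ⬝ᵥ Q.mulVec u ≤ -c := by
        have := hmax huK; simpa [hc] using this
      have hun : ‖u‖ = 1 := mem_sphere_zero_iff_norm.mp huK.1
      have h2 : |u ⬝ᵥ (Q' - Q).mulVec u| ≤ (n:ℝ)^2 * ‖Q' - Q‖ :=
        quad_bound _ u (le_of_eq hun)
      have h3 : u ⬝ᵥ Q'.mulVec u = u ⬝ᵥ Q.mulVec u + u ⬝ᵥ (Q' - Q).mulVec u := by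
        rw [Matrix.sub_mulVec, dotProduct_sub]; ring
      have h4 : (n:ℝ)^2 * ‖Q' - Q‖ ≤ (n:ℝ)^2 * (c / ((n:ℝ)^2 + 1)) :=
        mul_le_mul_of_nonneg_left hQ'.le (by positivity)
      have h5 : (n:ℝ)^2 * (c / ((n:ℝ)^2 + 1)) < c := by
        have h6 : (0:ℝ) < (n:ℝ)^2 + 1 := by positivity
        rw [mul_div_assoc', div_lt_iff₀ h6]
        nlinarith [hcpos, sq_nonneg (n:ℝ)]
      have h7 := (abs_le.mp h2).2
      linarith
    have hxu : x = ‖x‖ • u := by rw [hu, smul_smul, mul_inv_cancel₀ hxn, one_smul]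
    have hkey : x ⬝ᵥ Q'.mulVec x = ‖x‖^2 * (u ⬝ᵥ Q'.mulVec u) := by
      conv_lhs => rw [hxu]
      rw [Matrix.mulVec_smul, smul_dotProduct, dotProduct_smul, smul_eq_mul, smul_eq_mul]
      ring
    rw [hkey]
    have hpos : (0:ℝ) < ‖x‖^2 := by positivity
    exact mul_neg_of_pos_of_neg hpos hub

lemma dot_sum (x : Fin n → ℝ) (S : Finset (Fin n)) (f : Fin n → (Fin n → ℝ)) :
    x ⬝ᵥ (∑ j ∈ S, f j) = ∑ j ∈ S, x ⬝ᵥ f j := by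
  simp only [dotProduct, Finset.sum_apply, Finset.mul_sum]
  exact Finset.sum_comm

section Ortho
variable {v : Fin n → (Fin n → ℝ)}

lemma coeff_eq (hvv : ∀ i j, v i ⬝ᵥ v j = if i = j then 1 else 0)
    (S : Finset (Fin n)) (c : Fin n → ℝ) {i : Fin n} (hi : i ∈ S) :
    v i ⬝ᵥ (∑ j ∈ S, c j • v j) = c i := by
  rw [dot_sum]
  have : ∀ j ∈ S, v i ⬝ᵥ (c j • v j) = if j = i then c i else 0 := by
    intro j _
    rw [dotProduct_smul, hvv i j, smul_eq_mul]
    by_cases h : i = j <;> simp [h, eq_comm]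
  rw [Finset.sum_congr rfl this, Finset.sum_ite_eq' S i fun _ => c i, if_pos hi]

lemma ortho_li (hvv : ∀ i j, v i ⬝ᵥ v j = if i = j then 1 else 0) :
    LinearIndependent ℝ v := by
  rw [linearIndependent_iff']
  intro s g hg i hi
  have := congrArg (fun y => v i ⬝ᵥ y) hg
  simpa [coeff_eq hvv s g hi] using this

lemma finrank_span_image (hvv : ∀ i j, v i ⬝ᵥ v j = if i = j then 1 else 0)
    (S : Finset (Fin n)) :
    finrank ℝ (span ℝ (v '' ↑S)) = S.card := by
  rw [Set.image_eq_range]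
  rw [show (Set.range fun x : ↑(↑S : Set (Fin n)) => v ↑x) =
      Set.range (v ∘ (Subtype.val : ↑(↑S : Set (Fin n)) → Fin n)) from rfl]
  rw [finrank_span_eq_card ((ortho_li hvv).comp Subtype.val Subtype.val_injective)]
  simp

lemma mem_span_image_iff (hvv : ∀ i j, v i ⬝ᵥ v j = if i = j then 1 else 0)
    (S : Finset (Fin n)) (x : Fin n → ℝ) :
    x ∈ span ℝ (v '' ↑S) ↔ ∃ c : Fin n → ℝ, x = ∑ i ∈ S, c i • v i := by
  constructor
  · intro hx
    rw [← Finset.coe_image, mem_span_finset] at hx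
    obtain ⟨f, hf⟩ := hx
    refine ⟨fun i => f (v i), ?_⟩
    rw [← hf.2, Finset.sum_image ?_]
    exact fun i _ j _ h => (ortho_li hvv).injective h
  · rintro ⟨c, rfl⟩
    exact Submodule.sum_mem _ fun i hi =>
      Submodule.smul_mem _ _ (Submodule.subset_span ⟨i, hi, rfl⟩)

lemma mulVec_expand {Q : Matrix (Fin n) (Fin n) ℝ} {lam : Fin n → ℝ}
    (hvQ : ∀ i, Q.mulVec (v i) = lam i • v i) (S : Finset (Fin n)) (c : Fin n → ℝ) :
    Q.mulVec (∑ i ∈ S, c i • v i) = ∑ i ∈ S, (c i * lam i) • v i := by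
  rw [← Matrix.mulVecLin_apply, map_sum]
  refine Finset.sum_congr rfl fun i _ => ?_
  rw [_root_.map_smul, Matrix.mulVecLin_apply, hvQ i, smul_smul]

lemma qform_eq {Q : Matrix (Fin n) (Fin n) ℝ} {lam : Fin n → ℝ}
    (hvQ : ∀ i, Q.mulVec (v i) = lam i • v i)
    (hvv : ∀ i j, v i ⬝ᵥ v j = if i = j then 1 else 0)
    (S : Finset (Fin n)) (c : Fin n → ℝ) :
    (∑ i ∈ S, c i • v i) ⬝ᵥ Q.mulVec (∑ i ∈ S, c i • v i) = ∑ i ∈ S, lam i * (c i)^2 := by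
  rw [mulVec_expand hvQ S c, dot_sum]
  refine Finset.sum_congr rfl fun i hi => ?_
  rw [dotProduct_smul, dotProduct_comm, coeff_eq hvv S c hi, smul_eq_mul]
  ring

end Ortho

lemma vecMulVec_quad (u x : Fin n → ℝ) :
    x ⬝ᵥ (vecMulVec u u).mulVec x = (u ⬝ᵥ x)^2 := by
  simp only [Matrix.mulVec, Matrix.vecMulVec_apply, dotProduct, sq]
  rw [Finset.sum_mul_sum]
  refine Finset.sum_congr rfl fun i _ => ?_
  rw [Finset.mul_sum]
  refine Finset.sum_congr rfl fun j _ => ?_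
  ring

lemma inter_ne_bot (W1 W2 : Submodule ℝ (Fin n → ℝ))
    (h : n < finrank ℝ W1 + finrank ℝ W2) : ∃ x, x ∈ W1 ∧ x ∈ W2 ∧ x ≠ 0 := by
  have h1 := Submodule.finrank_sup_add_finrank_inf_eq W1 W2
  have h2 : finrank ℝ ↥(W1 ⊔ W2) ≤ n := by
    have := Submodule.finrank_le (W1 ⊔ W2)
    rwa [Module.finrank_fin_fun] at this
  have h3 : 0 < finrank ℝ ↥(W1 ⊓ W2) := by omega
  have h4 : W1 ⊓ W2 ≠ ⊥ := by
    intro hbot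
    rw [hbot, finrank_bot] at h3
    omega
  obtain ⟨x, hx, hx0⟩ := Submodule.exists_mem_ne_zero_of_ne_bot h4
  exact ⟨x, hx.1, hx.2, hx0⟩


section Spec
variable {v : Fin n → Fin n → ℝ} {Q : Matrix (Fin n) (Fin n) ℝ} {lam : Fin n → ℝ}

lemma exists_coeff_ne_zero {S : Finset (Fin n)} {c : Fin n → ℝ}
    (hx : (∑ i ∈ S, c i • v i) ≠ 0) : ∃ i ∈ S, c i ≠ 0 := by
  by_contra h
  push_neg at h
  exact hx (Finset.sum_eq_zero fun i hi => by rw [h i hi, zero_smul])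

lemma negDef_span_neg (hvQ : ∀ i, Q.mulVec (v i) = lam i • v i)
    (hvv : ∀ i j, v i ⬝ᵥ v j = if i = j then 1 else 0)
    {S : Finset (Fin n)} (hS : ∀ i ∈ S, lam i < 0) :
    NegDef Q (span ℝ (v '' ↑S)) := by
  intro x hx hx0
  obtain ⟨c, rfl⟩ := (mem_span_image_iff hvv S x).mp hx
  rw [qform_eq hvQ hvv]
  obtain ⟨i₀, hi₀, hc₀⟩ := exists_coeff_ne_zero hx0
  have := Finset.sum_lt_sum (f := fun i => lam i * (c i)^2) (g := fun _ => (0:ℝ))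
    (fun i hi => mul_nonpos_of_nonpos_of_nonneg (le_of_lt (hS i hi)) (sq_nonneg _))
    ⟨i₀, hi₀, mul_neg_of_neg_of_pos (hS i₀ hi₀) (by positivity)⟩
  simpa using this

lemma negIndex_eq_card (hvQ : ∀ i, Q.mulVec (v i) = lam i • v i)
    (hvv : ∀ i j, v i ⬝ᵥ v j = if i = j then 1 else 0) :
    negIndex Q = (Finset.univ.filter fun i => lam i < 0).card := by
  set NS := Finset.univ.filter fun i => lam i < 0 with hNS
  have hm_le_n : NS.card ≤ n := le_trans (Finset.card_filter_le _ _) (by simp)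
  apply le_antisymm
  · rw [negIndex_le_iff]
    rintro ⟨W, hW, hneg⟩
    set V := span ℝ (v '' ↑(NSᶜ)) with hV
    have hVrank : finrank ℝ V = n - NS.card := by
      rw [hV, finrank_span_image hvv, Finset.card_compl]; simp
    obtain ⟨x, hxW, hxV, hx0⟩ := inter_ne_bot W V (by omega)
    have h1 : x ⬝ᵥ Q.mulVec x < 0 := hneg x hxW hx0
    obtain ⟨c, rfl⟩ := (mem_span_image_iff hvv _ x).mp hxV
    rw [qform_eq hvQ hvv] at h1
    have h2 : (0:ℝ) ≤ ∑ i ∈ NSᶜ, lam i * (c i)^2 := by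
      refine Finset.sum_nonneg fun i hi => ?_
      have : ¬(lam i < 0) := by
        simpa [hNS] using (Finset.mem_compl.mp hi)
      exact mul_nonneg (by linarith) (sq_nonneg _)
    linarith
  · exact le_negIndex Q ⟨_, finrank_span_image hvv NS,
      negDef_span_neg hvQ hvv (fun i hi => by simpa [hNS] using hi)⟩

lemma ker_eq_span (hvQ : ∀ i, Q.mulVec (v i) = lam i • v i)
    (hvv : ∀ i j, v i ⬝ᵥ v j = if i = j then 1 else 0) :
    LinearMap.ker (Matrix.toLin' Q) =
      span ℝ (v '' ↑(Finset.univ.filter fun i => lam i = 0)) := by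
  set ZS := Finset.univ.filter fun i => lam i = 0 with hZS
  apply le_antisymm
  · intro x hx
    have hQx : Q.mulVec x = 0 := by rwa [LinearMap.mem_ker, Matrix.toLin'_apply] at hx
    have hxtop : x ∈ span ℝ (v '' ↑(Finset.univ : Finset (Fin n))) := by
      have : span ℝ (v '' ↑(Finset.univ : Finset (Fin n))) = ⊤ := by
        apply Submodule.eq_top_of_finrank_eq
        rw [finrank_span_image hvv, Module.finrank_fin_fun]; simp
      rw [this]; trivial
    obtain ⟨c, rfl⟩ := (mem_span_image_iff hvv _ x).mp hxtop
    have hcoeff : ∀ i, c i * lam i = 0 := by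
      intro i
      have h1 : v i ⬝ᵥ Q.mulVec (∑ j ∈ Finset.univ, c j • v j) = c i * lam i := by
        rw [mulVec_expand hvQ]
        exact coeff_eq hvv _ _ (Finset.mem_univ i)
      rw [hQx] at h1
      simpa [dotProduct] using h1.symm
    rw [mem_span_image_iff hvv]
    refine ⟨c, ?_⟩
    rw [← Finset.sum_subset (Finset.subset_univ ZS) ?_]
    intro i _ hi
    have hlam : lam i ≠ 0 := by simpa [hZS] using hi
    have : c i = 0 := by
      rcases mul_eq_zero.mp (hcoeff i) with h | h
      · exact h
      · exact absurd h hlam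
    rw [this, zero_smul]
  · rw [Submodule.span_le]
    rintro - ⟨i, hi, rfl⟩
    rw [SetLike.mem_coe, LinearMap.mem_ker, Matrix.toLin'_apply, hvQ i]
    have : lam i = 0 := by simpa [hZS] using hi
    rw [this, zero_smul]

lemma finrank_ker_eq_card (hvQ : ∀ i, Q.mulVec (v i) = lam i • v i)
    (hvv : ∀ i j, v i ⬝ᵥ v j = if i = j then 1 else 0) :
    finrank ℝ (LinearMap.ker (Matrix.toLin' Q)) =
      (Finset.univ.filter fun i => lam i = 0).card := by
  rw [ker_eq_span hvQ hvv, finrank_span_image hvv]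

lemma cards_le (lam : Fin n → ℝ) :
    (Finset.univ.filter fun i => lam i < 0).card +
      (Finset.univ.filter fun i => lam i = 0).card ≤ n := by
  rw [← Finset.card_union_of_disjoint ?_]
  · exact le_trans (Finset.card_le_card (Finset.subset_univ _)) (by simp)
  · rw [Finset.disjoint_left]
    intro a ha ha'
    simp only [Finset.mem_filter] at ha ha'
    exact absurd ha'.2 (ne_of_lt ha.2)

end Spec

section Spec
variable {v : Fin n → Fin n → ℝ} {Q : Matrix (Fin n) (Fin n) ℝ} {lam : Fin n → ℝ}

lemma stable_bound (hvQ : ∀ i, Q.mulVec (v i) = lam i • v i)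
    (hvv : ∀ i j, v i ⬝ᵥ v j = if i = j then 1 else 0) :
    ∃ ε > 0, ∀ Q' : Matrix (Fin n) (Fin n) ℝ, ‖Q' - Q‖ < ε →
      negIndex Q' ≤ (Finset.univ.filter fun i => lam i < 0).card +
        (Finset.univ.filter fun i => lam i = 0).card := by
  set NS := Finset.univ.filter fun i => lam i < 0 with hNS
  set ZS := Finset.univ.filter fun i => lam i = 0 with hZS
  set P : Finset (Fin n) := NS ∪ ZS with hP
  set V := span ℝ (v '' ↑(Pᶜ)) with hV
  have hposV : NegDef (-Q) V := by
    intro x hx hx0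
    obtain ⟨c, rfl⟩ := (mem_span_image_iff hvv _ x).mp hx
    rw [Matrix.neg_mulVec, dotProduct_neg, qform_eq hvQ hvv, neg_lt, neg_zero]
    obtain ⟨i₀, hi₀, hc₀⟩ := exists_coeff_ne_zero hx0
    have hpos : ∀ i ∈ Pᶜ, 0 < lam i := by
      intro i hi
      have := Finset.mem_compl.mp hi
      simp only [hP, Finset.mem_union, hNS, hZS, Finset.mem_filter, Finset.mem_univ,
        true_and, not_or] at this
      rcases lt_trichotomy (lam i) 0 with h | h | h
      · exact absurd h this.1
      · exact absurd h this.2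
      · exact h
    have := Finset.sum_lt_sum (f := fun _ => (0:ℝ)) (g := fun i => lam i * (c i)^2)
      (fun i hi => mul_nonneg (le_of_lt (hpos i hi)) (sq_nonneg _))
      ⟨i₀, hi₀, mul_pos (hpos i₀ hi₀) (by positivity)⟩
    simpa using this
  obtain ⟨ε, hε, hstab⟩ := negDef_stab hposV
  refine ⟨ε, hε, fun Q' hQ' => ?_⟩
  have hQ'' : ‖(-Q') - (-Q)‖ < ε := by
    rw [show (-Q') - (-Q) = -(Q' - Q) by abel, norm_neg]; exact hQ'
  have hposV' := hstab (-Q') hQ''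
  rw [negIndex_le_iff]
  rintro ⟨W, hW, hneg⟩
  have hVrank : finrank ℝ V = n - P.card := by
    rw [hV, finrank_span_image hvv, Finset.card_compl]; simp
  have hPn : P.card ≤ n := le_trans (Finset.card_le_card (Finset.subset_univ _)) (by simp)
  have hPcard : P.card ≤ NS.card + ZS.card := Finset.card_union_le _ _
  obtain ⟨x, hxW, hxV, hx0⟩ := inter_ne_bot W V (by omega)
  have h1 : x ⬝ᵥ Q'.mulVec x < 0 := hneg x hxW hx0
  have h2 : x ⬝ᵥ (-Q').mulVec x < 0 := hposV' x hxV hx0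
  rw [Matrix.neg_mulVec, dotProduct_neg] at h2
  linarith

lemma perturb (hQs : Q.IsSymm) (hvQ : ∀ i, Q.mulVec (v i) = lam i • v i)
    (hvv : ∀ i j, v i ⬝ᵥ v j = if i = j then 1 else 0)
    (j : ℕ) (hj1 : (Finset.univ.filter fun i => lam i < 0).card ≤ j)
    (hj2 : j < (Finset.univ.filter fun i => lam i < 0).card +
      (Finset.univ.filter fun i => lam i = 0).card)
    (ε : ℝ) (hε : 0 < ε) :
    ∃ Q' : Matrix (Fin n) (Fin n) ℝ, Q'.IsSymm ∧ ‖Q' - Q‖ < ε ∧ j + 1 ≤ negIndex Q' := by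
  set NS := Finset.univ.filter fun i => lam i < 0 with hNS
  set ZS := Finset.univ.filter fun i => lam i = 0 with hZS
  set t : ℕ := j + 1 - NS.card with ht
  have ht1 : 1 ≤ t := by omega
  have ht2 : t ≤ ZS.card := by omega
  obtain ⟨T, hTZ, hTcard⟩ := Finset.exists_subset_card_eq ht2
  set E : Matrix (Fin n) (Fin n) ℝ := ∑ i ∈ T, vecMulVec (v i) (v i) with hE
  set δ : ℝ := ε / (‖E‖ + 1) with hδ
  have hEnorm : (0:ℝ) ≤ ‖E‖ := norm_nonneg _
  have hδpos : 0 < δ := by positivity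
  refine ⟨Q - δ • E, ?_, ?_, ?_⟩
  · -- symmetry
    have hEsymm : E.IsSymm := by
      rw [Matrix.IsSymm, hE, Matrix.transpose_sum]
      refine Finset.sum_congr rfl fun i _ => ?_
      ext a b
      simp [Matrix.transpose_apply, Matrix.vecMulVec_apply, mul_comm]
    rw [Matrix.IsSymm, Matrix.transpose_sub, Matrix.transpose_smul, hQs, hEsymm]
  · rw [show Q - δ • E - Q = -(δ • E) by abel, norm_neg, norm_smul,
      Real.norm_eq_abs, abs_of_pos hδpos]
    have h2 : δ * ‖E‖ < δ * (‖E‖ + 1) := by nlinarith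
    have h3 : δ * (‖E‖ + 1) = ε := by
      rw [hδ]; field_simp
    linarith
  · -- negIndex ≥ j + 1
    set S : Finset (Fin n) := NS ∪ T with hS
    have hdisj : Disjoint NS T := by
      rw [Finset.disjoint_left]
      intro a ha haT
      have h1 : lam a < 0 := by simpa [hNS] using ha
      have h2 : lam a = 0 := by simpa [hZS] using hTZ haT
      rw [h2] at h1; exact absurd h1 (lt_irrefl 0)
    have hScard : S.card = j + 1 := by
      rw [hS, Finset.card_union_of_disjoint hdisj, hTcard]; omega
    apply le_negIndex
    refine ⟨span ℝ (v '' ↑S), by rw [finrank_span_image hvv, hScard], ?_⟩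
    intro x hx hx0
    obtain ⟨c, rfl⟩ := (mem_span_image_iff hvv _ x).mp hx
    set x := ∑ i ∈ S, c i • v i with hx_def
    have hsplit : x ⬝ᵥ (Q - δ • E).mulVec x =
        (∑ i ∈ S, lam i * (c i)^2) - δ * ∑ i ∈ T, (c i)^2 := by
      rw [Matrix.sub_mulVec, dotProduct_sub, qform_eq hvQ hvv]
      congr 1
      rw [Matrix.smul_mulVec, dotProduct_smul, smul_eq_mul]
      congr 1
      have hEx : x ⬝ᵥ E.mulVec x = ∑ i ∈ T, (v i ⬝ᵥ x)^2 := by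
        have hmv : E.mulVec x = ∑ i ∈ T, (vecMulVec (v i) (v i)).mulVec x := by
          ext k
          simp only [hE, Matrix.mulVec, dotProduct, Matrix.sum_apply, Finset.sum_apply, Finset.sum_mul]
          exact Finset.sum_comm
        rw [hmv, dot_sum x T fun i => (vecMulVec (v i) (v i)).mulVec x]
        exact Finset.sum_congr rfl fun i _ => vecMulVec_quad (v i) x
      rw [hEx]
      refine Finset.sum_congr rfl fun i hi => ?_
      rw [hx_def, coeff_eq hvv S c (Finset.mem_union_right NS hi)]
    rw [hsplit]
    have hterm1 : ∑ i ∈ S, lam i * (c i)^2 ≤ 0 := by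
      refine Finset.sum_nonpos fun i hi => ?_
      rcases Finset.mem_union.mp hi with h | h
      · exact mul_nonpos_of_nonpos_of_nonneg (le_of_lt (by simpa [hNS] using h)) (sq_nonneg _)
      · have : lam i = 0 := by simpa [hZS] using hTZ h
        rw [this, zero_mul]
    have hterm2 : 0 ≤ ∑ i ∈ T, (c i)^2 := Finset.sum_nonneg fun i _ => sq_nonneg _
    obtain ⟨i₀, hi₀, hc₀⟩ := exists_coeff_ne_zero hx0
    rcases Finset.mem_union.mp hi₀ with h | h
    · have : ∑ i ∈ S, lam i * (c i)^2 < 0 := by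
        have := Finset.sum_lt_sum (f := fun i => lam i * (c i)^2) (g := fun _ => (0:ℝ))
          (fun i hi => by
            rcases Finset.mem_union.mp hi with h' | h'
            · exact mul_nonpos_of_nonpos_of_nonneg (le_of_lt (by simpa [hNS] using h')) (sq_nonneg _)
            · have h0 : lam i = 0 := by simpa [hZS] using hTZ h'
              simp [h0])
          ⟨i₀, hi₀, mul_neg_of_neg_of_pos (by simpa [hNS] using h) (by positivity)⟩
        simpa using this
      nlinarith
    · have : (0:ℝ) < ∑ i ∈ T, (c i)^2 := by
        have := Finset.sum_lt_sum (f := fun _ => (0:ℝ)) (g := fun i => (c i)^2)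
          (fun i _ => sq_nonneg _) ⟨i₀, h, by positivity⟩
        simpa using this
      nlinarith

end Spec


lemma spectral_data {Q : Matrix (Fin n) (Fin n) ℝ} (hQ : Q.IsSymm) :
    ∃ (v : Fin n → Fin n → ℝ) (lam : Fin n → ℝ),
      (∀ i, Q.mulVec (v i) = lam i • v i) ∧
      (∀ i j, v i ⬝ᵥ v j = if i = j then 1 else 0) := by
  have hH : Q.IsHermitian := by
    rw [Matrix.IsHermitian, conjTranspose_eq_transpose_of_trivial]; exact hQ
  refine ⟨fun i j => hH.eigenvectorBasis i j, hH.eigenvalues,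
    fun i => hH.mulVec_eigenvectorBasis i, ?_⟩
  intro i j
  have h := hH.eigenvectorBasis.orthonormal
  rw [orthonormal_iff_ite] at h
  have h' := h i j
  rw [← h']
  simp [PiLp.inner_apply, dotProduct]
  exact Finset.sum_congr rfl fun _ _ => mul_comm _ _

lemma isOpen_negIndex_ge (d : ℕ) :
    IsOpen {M : Matrix (Fin n) (Fin n) ℝ | d ≤ negIndex M} := by
  refine Metric.isOpen_iff.mpr ?_
  intro M hM
  obtain ⟨W, hW, hneg⟩ := mem_nSet_of_le_negIndex M hM
  obtain ⟨ε, hε, hstab⟩ := negDef_stab hneg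
  refine ⟨ε, hε, fun M' hM' => ?_⟩
  rw [Metric.mem_ball, dist_eq_norm] at hM'
  exact le_negIndex M' ⟨W, hW, hstab M' hM'⟩

lemma isClosed_Pj (j : ℕ) : IsClosed (Pj n j) := by
  have h1 : Pj n j =
      (Subtype.val) ⁻¹' {M : Matrix (Fin n) (Fin n) ℝ | negIndex M ≤ j} := rfl
  rw [h1]
  apply IsClosed.preimage continuous_subtype_val
  have h2 : {M : Matrix (Fin n) (Fin n) ℝ | negIndex M ≤ j} =
      {M : Matrix (Fin n) (Fin n) ℝ | j + 1 ≤ negIndex M}ᶜ := by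
    ext M
    simp only [Set.mem_setOf_eq, Set.mem_compl_iff, not_le]
    omega
  rw [h2]
  exact (isOpen_negIndex_ge (j+1)).isClosed_compl

lemma mem_Aj_iff (j : ℕ) (Q : SymMat n) :
    Q ∈ Aj n j ↔ negIndex Q.1 ≤ j ∧
      j < negIndex Q.1 + finrank ℝ (LinearMap.ker (Matrix.toLin' Q.1)) := by
  obtain ⟨v, lam, hvQ, hvv⟩ := spectral_data Q.2
  have hm : negIndex Q.1 = (Finset.univ.filter fun i => lam i < 0).card :=
    negIndex_eq_card hvQ hvv
  have hk : finrank ℝ (LinearMap.ker (Matrix.toLin' Q.1)) =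
      (Finset.univ.filter fun i => lam i = 0).card := finrank_ker_eq_card hvQ hvv
  rw [Aj, frontier, (isClosed_Pj j).closure_eq]
  constructor
  · rintro ⟨hQP, hQI⟩
    refine ⟨hQP, ?_⟩
    by_contra hcon
    push_neg at hcon
    apply hQI
    obtain ⟨ε, hε, hb⟩ := stable_bound hvQ hvv
    rw [mem_interior]
    refine ⟨Subtype.val ⁻¹' Metric.ball Q.1 ε, ?_, ?_, ?_⟩
    · intro Q' hQ'
      rw [Set.mem_preimage, Metric.mem_ball, dist_eq_norm] at hQ'
      have hbb := hb Q'.1 hQ'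
      show negIndex Q'.1 ≤ j
      omega
    · exact Metric.isOpen_ball.preimage continuous_subtype_val
    · simp [Metric.mem_ball, hε]
  · rintro ⟨h1, h2⟩
    refine ⟨h1, fun hQI => ?_⟩
    rw [mem_interior] at hQI
    obtain ⟨U, hUP, hUopen, hQU⟩ := hQI
    obtain ⟨V, hVopen, hUV⟩ := isOpen_induced_iff.mp hUopen
    have hQV : Q.1 ∈ V := by
      rw [← hUV] at hQU; exact hQU
    obtain ⟨ε, hε, hball⟩ := Metric.isOpen_iff.mp hVopen Q.1 hQV
    obtain ⟨Q', hQ's, hQ'n, hQ'i⟩ := perturb Q.2 hvQ hvv j (by omega) (by omega) ε hε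
    have hmem : (⟨Q', hQ's⟩ : SymMat n) ∈ U := by
      rw [← hUV]
      exact hball (by rw [Metric.mem_ball, dist_eq_norm]; exact hQ'n)
    have := hUP hmem
    have : negIndex Q' ≤ j := this
    omega

lemma sum_le_n (Q : SymMat n) :
    negIndex Q.1 + finrank ℝ (LinearMap.ker (Matrix.toLin' Q.1)) ≤ n := by
  obtain ⟨v, lam, hvQ, hvv⟩ := spectral_data Q.2
  rw [negIndex_eq_card hvQ hvv, finrank_ker_eq_card hvQ hvv]
  exact cards_le lam

end ZrAux

open ZrAux in
/-- For every `r ≥ 1`, the set `Z^(r) = {Q ∈ Sym_n(ℝ) : dim ker(Q) ≥ r}` equals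
`⋃_{α ∈ I_r} ⋂_{j ∈ α} A_j`, where `I_r` is the collection of subsets of `{0,…,n−1}`
consisting of `r` consecutive integers. -/
theorem Zr_eq_union_inter_frontiers (n r : ℕ) (hr : 1 ≤ r) :
    {Q : SymMat n | r ≤ Module.finrank ℝ (LinearMap.ker (Matrix.toLin' Q.1))} =
      ⋃ (i : ℕ) (_ : i + r ≤ n), ⋂ j ∈ Finset.Ico i (i + r), Aj n j := by
  ext Q
  simp only [Set.mem_setOf_eq, Set.mem_iUnion, Set.mem_iInter, Finset.mem_Ico]
  constructor
  · intro hQ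
    have hle := sum_le_n Q
    refine ⟨negIndex Q.1, by omega, ?_⟩
    intro j hj
    rw [mem_Aj_iff]
    omega
  · rintro ⟨i, hin, hmem⟩
    have h1 := (mem_Aj_iff i Q).mp (hmem i ⟨le_refl i, by omega⟩)
    have h2 := (mem_Aj_iff (i+r-1) Q).mp (hmem (i+r-1) ⟨by omega, by omega⟩)
    omega
end

section
/- Let H(x) = 2δ(1+x)^{k+1} / ((1+2x)(1+δx)). Then the (k−2)-nd Taylor coefficient of H at x = 0 equals (−1)^k · Σ_{j=0}^{k−2} ( Σ_{i=0}^{j} C(k+1,i)·(−1/2)^i ) · 2^{j+1} · δ^{k−j−1}. -/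
open Finset
open scoped NNReal ENNReal

/-- Partial alternating binomial sum. -/
private noncomputable def Scoef (k j : ℕ) : ℝ :=
  ∑ i ∈ Finset.range (j + 1), ((k + 1).choose i : ℝ) * (-1 / 2) ^ i

/-- Taylor coefficients of `H`. -/
private noncomputable def ccoef (k : ℕ) (δ : ℝ) (n : ℕ) : ℝ :=
  ∑ p ∈ Finset.range (n + 1), 2 * δ * (-2) ^ p * Scoef k p * (-δ) ^ (n - p)

private lemma Scoef_abs_le (k j : ℕ) : |Scoef k j| ≤ 2 ^ (k + 1) := by
  have h1 : |Scoef k j| ≤ ∑ i ∈ Finset.range (j + 1), |((k + 1).choose i : ℝ) * (-1 / 2) ^ i| :=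
    Finset.abs_sum_le_sum_abs _ _
  have h2 : ∀ i ∈ Finset.range (j + 1),
      |((k + 1).choose i : ℝ) * (-1 / 2) ^ i| ≤ ((k + 1).choose i : ℝ) := by
    intro i _
    rw [abs_mul, abs_pow]
    have : |(-1 / 2 : ℝ)| = 1 / 2 := by norm_num
    rw [this, Nat.abs_cast]
    have hpow : ((1:ℝ)/2) ^ i ≤ 1 := pow_le_one₀ (by norm_num) (by norm_num)
    have hpow0 : (0:ℝ) ≤ ((1:ℝ)/2) ^ i := by positivity
    have hc : (0:ℝ) ≤ ((k+1).choose i : ℝ) := Nat.cast_nonneg _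
    nlinarith
  have h3 : (∑ i ∈ Finset.range (j + 1), ((k + 1).choose i : ℝ)) ≤ 2 ^ (k + 1) := by
    have hN : (∑ i ∈ Finset.range (j + 1), (k + 1).choose i) ≤ 2 ^ (k + 1) := by
      have hsub : Finset.range (j + 1) ⊆ Finset.range (j + 1 + (k + 2)) :=
        Finset.range_subset_range.mpr (by omega)
      have h4 : (∑ i ∈ Finset.range (j + 1), (k + 1).choose i) ≤
          ∑ i ∈ Finset.range (j + 1 + (k + 2)), (k + 1).choose i :=
        Finset.sum_le_sum_of_subset hsub
      have h5 : (∑ i ∈ Finset.range (j + 1 + (k + 2)), (k + 1).choose i) =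
          ∑ i ∈ Finset.range (k + 2), (k + 1).choose i := by
        refine (Finset.sum_subset (Finset.range_subset_range.mpr (by omega)) ?_).symm
        intro i _ hi
        exact Nat.choose_eq_zero_of_lt (by simp at hi; omega)
      rw [h5] at h4
      simpa [Nat.sum_range_choose] using h4
    exact_mod_cast hN
  calc |Scoef k j| ≤ _ := h1
    _ ≤ _ := Finset.sum_le_sum h2
    _ ≤ _ := h3

/-- First Cauchy-product identity. -/
private lemma id1 (k n : ℕ) (δ y : ℝ) :
    (∑ p ∈ Finset.range (n + 1),
      (2 * δ * ((k + 1).choose p : ℝ) * y ^ p) * (-(2 * y)) ^ (n - p)) =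
    2 * δ * (-2) ^ n * Scoef k n * y ^ n := by
  rw [Scoef, Finset.mul_sum, Finset.sum_mul]
  refine Finset.sum_congr rfl fun p hp => ?_
  have hpn : p ≤ n := Nat.lt_succ_iff.mp (Finset.mem_range.mp hp)
  have h1 : (-(2 * y)) ^ (n - p) = (-2 : ℝ) ^ (n - p) * y ^ (n - p) := by
    rw [← neg_mul, mul_pow]
  have h2 : ((-2 : ℝ)) ^ (n - p) = (-2) ^ n * (-1 / 2) ^ p := by
    rw [pow_sub₀ _ (by norm_num) hpn]
    congr 1
    rw [← inv_pow]
    norm_num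
  have h3 : y ^ p * y ^ (n - p) = y ^ n := by
    rw [← pow_add]
    congr 1
    omega
  rw [h1, h2]
  calc (2 * δ * ((k + 1).choose p : ℝ) * y ^ p) * ((-2) ^ n * (-1 / 2) ^ p * y ^ (n - p))
      = 2 * δ * (-2) ^ n * (((k + 1).choose p : ℝ) * (-1 / 2) ^ p) * (y ^ p * y ^ (n - p)) := by
        ring
    _ = _ := by rw [h3]

/-- Second Cauchy-product identity. -/
private lemma id2 (k n : ℕ) (δ y : ℝ) :
    (∑ p ∈ Finset.range (n + 1),
      (2 * δ * (-2) ^ p * Scoef k p * y ^ p) * (-(δ * y)) ^ (n - p)) =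
    ccoef k δ n * y ^ n := by
  rw [ccoef, Finset.sum_mul]
  refine Finset.sum_congr rfl fun p hp => ?_
  have hpn : p ≤ n := Nat.lt_succ_iff.mp (Finset.mem_range.mp hp)
  have h1 : (-(δ * y)) ^ (n - p) = (-δ : ℝ) ^ (n - p) * y ^ (n - p) := by
    rw [← neg_mul, mul_pow]
  have h3 : y ^ p * y ^ (n - p) = y ^ n := by
    rw [← pow_add]
    congr 1
    omega
  rw [h1]
  calc (2 * δ * (-2) ^ p * Scoef k p * y ^ p) * ((-δ) ^ (n - p) * y ^ (n - p))
      = 2 * δ * (-2) ^ p * Scoef k p * (-δ) ^ (n - p) * (y ^ p * y ^ (n - p)) := by ring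
    _ = _ := by rw [h3]

private lemma key_hasSum (k : ℕ) (δ : ℝ) (hδ : 0 < δ) (y : ℝ)
    (h2 : |2 * y| < 1) (hd : |δ * y| < 1) :
    HasSum (fun n => ccoef k δ n * y ^ n)
      (2 * δ * (1 + y) ^ (k + 1) / ((1 + 2 * y) * (1 + δ * y))) := by
  have hne2 : (1 + 2 * y) ≠ 0 := by
    have := (abs_lt.mp h2).1; linarith
  have hned : (1 + δ * y) ≠ 0 := by
    have := (abs_lt.mp hd).1; linarith
  set f : ℕ → ℝ := fun i => 2 * δ * ((k + 1).choose i : ℝ) * y ^ i with hf_def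
  set g : ℕ → ℝ := fun j => (-(2 * y)) ^ j with hg_def
  set b : ℕ → ℝ := fun m => (-(δ * y)) ^ m with hb_def
  have hfz : ∀ i ∉ Finset.range (k + 2), f i = 0 := by
    intro i hi
    have : (k + 1).choose i = 0 := Nat.choose_eq_zero_of_lt (by simp at hi; omega)
    simp [hf_def, this]
  have hf : Summable fun i => ‖f i‖ :=
    summable_of_ne_finset_zero (s := Finset.range (k + 2)) (fun i hi => by simp [hfz i hi])
  have hg : Summable fun j => ‖g j‖ := by
    have h := summable_geometric_of_lt_one (abs_nonneg (2 * y)) h2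
    simpa only [hg_def, norm_pow, norm_neg, Real.norm_eq_abs] using h
  have hb : Summable fun m => ‖b m‖ := by
    have h := summable_geometric_of_lt_one (abs_nonneg (δ * y)) hd
    simpa only [hb_def, norm_pow, norm_neg, Real.norm_eq_abs] using h
  -- the middle series
  have hAnorm : Summable fun n => ‖2 * δ * (-2) ^ n * Scoef k n * y ^ n‖ := by
    have := summable_norm_sum_mul_range_of_summable_norm hf hg
    exact this.congr fun n => congrArg norm (id1 k n δ y)
  have htsumf : ∑' i, f i = 2 * δ * (1 + y) ^ (k + 1) := by
    rw [tsum_eq_sum hfz]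
    have hbinom : (1 + y) ^ (k + 1) = ∑ i ∈ Finset.range (k + 2), ((k + 1).choose i : ℝ) * y ^ i := by
      rw [add_comm, add_pow]
      exact Finset.sum_congr rfl fun i _ => by ring
    rw [hbinom, Finset.mul_sum]
    exact Finset.sum_congr rfl fun i _ => by ring
  have htsumg : ∑' j, g j = (1 + 2 * y)⁻¹ := by
    rw [hg_def, tsum_geometric_of_abs_lt_one (by simpa using h2)]
    norm_num
  have htsumb : ∑' m, b m = (1 + δ * y)⁻¹ := by
    rw [hb_def, tsum_geometric_of_abs_lt_one (by simpa using hd)]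
    norm_num
  have htsumA : ∑' n, 2 * δ * (-2) ^ n * Scoef k n * y ^ n =
      2 * δ * (1 + y) ^ (k + 1) * (1 + 2 * y)⁻¹ := by
    have h := tsum_mul_tsum_eq_tsum_sum_range_of_summable_norm hf hg
    rw [htsumf, htsumg] at h
    rw [h]
    exact tsum_congr fun n => (id1 k n δ y).symm
  have hCnorm : Summable fun n => ‖ccoef k δ n * y ^ n‖ := by
    have := summable_norm_sum_mul_range_of_summable_norm hAnorm hb
    exact this.congr fun n => congrArg norm (id2 k n δ y)
  have htsumC : ∑' n, ccoef k δ n * y ^ n =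
      2 * δ * (1 + y) ^ (k + 1) / ((1 + 2 * y) * (1 + δ * y)) := by
    have h := tsum_mul_tsum_eq_tsum_sum_range_of_summable_norm hAnorm hb
    rw [htsumA, htsumb] at h
    have heq : ∑' n, ∑ p ∈ Finset.range (n + 1),
        (2 * δ * (-2) ^ p * Scoef k p * y ^ p) * b (n - p) =
        ∑' n, ccoef k δ n * y ^ n := tsum_congr fun n => id2 k n δ y
    rw [heq] at h
    rw [← h]
    field_simp
  exact (Summable.hasSum_iff hCnorm.of_norm).mpr htsumC

/-- Let `H(x) = 2δ(1+x)^{k+1} / ((1+2x)(1+δx))`.  The `(k−2)`-nd Taylor coefficient of `H`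
at `x = 0`, i.e. `H^{(k-2)}(0)/(k-2)!`, equals
`(−1)^k · ∑_{j=0}^{k−2} ( ∑_{i=0}^{j} C(k+1,i)·(−1/2)^i ) · 2^{j+1} · δ^{k−j−1}`. -/
theorem taylor_coeff_H (k : ℕ) (hk : 2 ≤ k) (δ : ℝ) (hδ : 0 < δ)
    (H : ℝ → ℝ)
    (hH : ∀ x : ℝ, H x = 2 * δ * (1 + x) ^ (k + 1) / ((1 + 2 * x) * (1 + δ * x))) :
    iteratedDeriv (k - 2) H 0 / (Nat.factorial (k - 2) : ℝ) =
      (-1 : ℝ) ^ k * ∑ j ∈ Finset.range (k - 1),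
        (∑ i ∈ Finset.range (j + 1), ((k + 1).choose i : ℝ) * (-1 / 2) ^ i) *
          2 ^ (j + 1) * δ ^ (k - j - 1) := by
  -- the radius
  set ρ : ℝ := min 4⁻¹ (2 * (1 + δ))⁻¹ with hρ_def
  have hρpos : 0 < ρ := by
    apply lt_min (by norm_num)
    positivity
  -- coefficient bound
  have hcb : ∀ n : ℕ, |ccoef k δ n| * ρ ^ n ≤ 4 * δ * 2 ^ (k + 1) := by
    intro n
    set M : ℝ := max 2 δ with hM_def
    have hM0 : 0 ≤ M := le_trans (by norm_num) (le_max_left _ _)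
    have hterm : ∀ p ∈ Finset.range (n + 1),
        |2 * δ * (-2) ^ p * Scoef k p * (-δ) ^ (n - p)| ≤ 2 * δ * 2 ^ (k + 1) * M ^ n := by
      intro p hp
      have hpn : p ≤ n := Nat.lt_succ_iff.mp (Finset.mem_range.mp hp)
      have e1 : |2 * δ * (-2) ^ p * Scoef k p * (-δ) ^ (n - p)| =
          2 * δ * 2 ^ p * |Scoef k p| * δ ^ (n - p) := by
        rw [abs_mul, abs_mul, abs_mul, abs_pow, abs_pow, abs_neg, abs_neg]
        rw [abs_of_pos hδ, abs_of_pos (by norm_num : (0:ℝ) < 2)]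
        rw [abs_of_pos (by positivity : (0:ℝ) < 2 * δ)]
      rw [e1]
      have h2p : (2 : ℝ) ^ p * δ ^ (n - p) ≤ M ^ n := by
        have a1 : (2 : ℝ) ^ p ≤ M ^ p := pow_le_pow_left₀ (by norm_num) (le_max_left _ _) p
        have a2 : δ ^ (n - p) ≤ M ^ (n - p) := pow_le_pow_left₀ hδ.le (le_max_right _ _) _
        have : (2 : ℝ) ^ p * δ ^ (n - p) ≤ M ^ p * M ^ (n - p) :=
          mul_le_mul a1 a2 (by positivity) (by positivity)
        calc (2 : ℝ) ^ p * δ ^ (n - p) ≤ M ^ p * M ^ (n - p) := this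
          _ = M ^ n := by rw [← pow_add]; congr 1; omega
      have hS := Scoef_abs_le k p
      have hSnn : (0:ℝ) ≤ |Scoef k p| := abs_nonneg _
      calc 2 * δ * 2 ^ p * |Scoef k p| * δ ^ (n - p)
          = 2 * δ * |Scoef k p| * (2 ^ p * δ ^ (n - p)) := by ring
        _ ≤ 2 * δ * 2 ^ (k + 1) * M ^ n := by
            apply mul_le_mul
            · exact mul_le_mul_of_nonneg_left hS (by positivity)
            · exact h2p
            · positivity
            · positivity
    have hsum : |ccoef k δ n| ≤ (n + 1 : ℝ) * (2 * δ * 2 ^ (k + 1) * M ^ n) := by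
      calc |ccoef k δ n| ≤ ∑ p ∈ Finset.range (n + 1),
            |2 * δ * (-2) ^ p * Scoef k p * (-δ) ^ (n - p)| := by
            rw [ccoef]; exact Finset.abs_sum_le_sum_abs _ _
        _ ≤ ∑ _p ∈ Finset.range (n + 1), 2 * δ * 2 ^ (k + 1) * M ^ n :=
            Finset.sum_le_sum hterm
        _ = (n + 1 : ℝ) * (2 * δ * 2 ^ (k + 1) * M ^ n) := by
            rw [Finset.sum_const, Finset.card_range]; push_cast; ring
    have hMρ : M * ρ ≤ 1 / 2 := by
      rcases max_cases 2 δ with ⟨hM, _⟩ | ⟨hM, _⟩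
      · rw [hM_def, hM]
        have : ρ ≤ 4⁻¹ := min_le_left _ _
        linarith
      · rw [hM_def, hM]
        have h1 : ρ ≤ (2 * (1 + δ))⁻¹ := min_le_right _ _
        have h2 : δ * (2 * (1 + δ))⁻¹ ≤ 1 / 2 := by
          rw [mul_inv_le_iff₀ (by positivity : (0:ℝ) < 2 * (1 + δ))]
          linarith
        calc δ * ρ ≤ δ * (2 * (1 + δ))⁻¹ := mul_le_mul_of_nonneg_left h1 hδ.le
          _ ≤ 1 / 2 := h2
    have hMρn : (M * ρ) ^ n ≤ (1 / 2 : ℝ) ^ n :=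
      pow_le_pow_left₀ (by positivity) hMρ n
    have hn2 : (n + 1 : ℝ) * (1 / 2 : ℝ) ^ n ≤ 2 := by
      have h2n : (n : ℝ) < 2 ^ n := by exact_mod_cast (Nat.lt_two_pow_self : n < 2 ^ n)
      have hp : (0:ℝ) < 2 ^ n := by positivity
      have h1 : (1:ℝ) ≤ 2 ^ n := by exact_mod_cast Nat.one_le_two_pow
      rw [div_pow, one_pow, mul_one_div, div_le_iff₀ hp]
      linarith
    calc |ccoef k δ n| * ρ ^ n ≤ (n + 1 : ℝ) * (2 * δ * 2 ^ (k + 1) * M ^ n) * ρ ^ n := by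
          apply mul_le_mul_of_nonneg_right hsum (by positivity)
      _ = (2 * δ * 2 ^ (k + 1)) * ((n + 1 : ℝ) * (M * ρ) ^ n) := by rw [mul_pow]; ring
      _ ≤ (2 * δ * 2 ^ (k + 1)) * ((n + 1 : ℝ) * (1 / 2) ^ n) := by
          apply mul_le_mul_of_nonneg_left _ (by positivity)
          exact mul_le_mul_of_nonneg_left hMρn (by positivity)
      _ ≤ (2 * δ * 2 ^ (k + 1)) * 2 := by
          apply mul_le_mul_of_nonneg_left hn2 (by positivity)
      _ = 4 * δ * 2 ^ (k + 1) := by ring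
  -- the power series on ball
  have hball : HasFPowerSeriesOnBall H (FormalMultilinearSeries.ofScalars ℝ (ccoef k δ)) 0
      ((ρ.toNNReal : ℝ≥0∞)) := by
    constructor
    · apply FormalMultilinearSeries.le_radius_of_bound _ (4 * δ * 2 ^ (k + 1))
      intro n
      rw [FormalMultilinearSeries.ofScalars_norm, Real.norm_eq_abs,
        Real.coe_toNNReal _ hρpos.le]
      exact hcb n
    · exact_mod_cast Real.toNNReal_pos.mpr hρpos
    · intro y hy
      rw [mem_emetric_ball_zero_iff, enorm_eq_nnnorm, ENNReal.coe_lt_coe] at hy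
      have hy' : |y| < ρ := by
        have := hy
        rw [← NNReal.coe_lt_coe, Real.coe_toNNReal _ hρpos.le] at this
        simpa using this
      have h2y : |2 * y| < 1 := by
        rw [abs_mul]
        have : ρ ≤ 4⁻¹ := min_le_left _ _
        have : |y| < 4⁻¹ := lt_of_lt_of_le hy' this
        rw [abs_of_pos (by norm_num : (0:ℝ) < 2)]
        linarith
      have hdy : |δ * y| < 1 := by
        rw [abs_mul, abs_of_pos hδ]
        have h1 : ρ ≤ (2 * (1 + δ))⁻¹ := min_le_right _ _
        have h2 : |y| < (2 * (1 + δ))⁻¹ := lt_of_lt_of_le hy' h1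
        have h3 : δ * |y| < δ * (2 * (1 + δ))⁻¹ := by
          exact mul_lt_mul_of_pos_left h2 hδ
        have h4 : δ * (2 * (1 + δ))⁻¹ < 1 := by
          rw [mul_inv_lt_iff₀ (by positivity)]
          nlinarith
        linarith
      have := key_hasSum k δ hδ y h2y hdy
      rw [zero_add, hH y]
      convert this using 2 with n
      · rfl
      rw [FormalMultilinearSeries.ofScalars_apply_eq, smul_eq_mul]
  -- extract the derivative
  obtain ⟨m, rfl⟩ : ∃ m, k = m + 2 := ⟨k - 2, by omega⟩
  have hfact := hball.factorial_smul (1 : ℝ) (m + 2 - 2)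
  have hm2 : m + 2 - 2 = m := by omega
  rw [hm2] at hfact ⊢
  rw [iteratedDeriv_eq_iteratedFDeriv, ← hfact,
    FormalMultilinearSeries.ofScalars_apply_eq]
  rw [one_pow, smul_eq_mul, mul_one, nsmul_eq_mul,
    mul_div_cancel_left₀ _ (by exact_mod_cast Nat.factorial_ne_zero m : ((m.factorial : ℝ)) ≠ 0)]
  -- final algebraic identity
  rw [ccoef]
  have hrange : m + 2 - 1 = m + 1 := by omega
  rw [hrange, Finset.mul_sum]
  refine Finset.sum_congr rfl fun j hj => ?_
  have hjm : j ≤ m := Nat.lt_succ_iff.mp (Finset.mem_range.mp hj)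
  obtain ⟨i, rfl⟩ : ∃ i, m = j + i := ⟨m - j, by omega⟩
  have e1 : j + i + 2 - j - 1 = i + 1 := by omega
  have e2 : j + i - j = i := by omega
  rw [e1, e2]
  show 2 * δ * (-2) ^ j * Scoef (j + i + 2) j * (-δ) ^ i =
    (-1 : ℝ) ^ (j + i + 2) * (Scoef (j + i + 2) j * 2 ^ (j + 1) * δ ^ (i + 1))
  rw [neg_pow, neg_pow, pow_add, pow_add]
  ring
end
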